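/- For a nonnegative vector x ∈ ℝ₊^([Δ]²), any cell C at level i, the pyramid row u (entries 2^i on C, zero elsewhere) and any of the three Haar-type rows v of the rescaled wavelet transform W corresponding to C (entries ±2^{i−2} on C, zero elsewhere): |v · x| ≤ (1/4)|u · x|. Consequently, if S is a set of cells with ‖(Px)_{S̄}‖₁ ≤ ε·E, then the support S' of Wx obtained by taking the constant coefficient plus the three wavelet coefficients of each cell in S satisfies ‖(Wx)_{S̄'}‖₁ ≤ (3/4)ε·E. -/

import Mathlib

open scoped Classical BigOperators

/-- Pixels of a `2^l × 2^l` image. -/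
abbrev Pix (l : ℕ) := Fin (2^l) × Fin (2^l)

/-- Grid cells of the pyramid: a cell at level `i` has side `2^i`, and there
are `2^(l-i) × 2^(l-i)` of them. -/
abbrev Cell (l : ℕ) := Σ i : Fin (l+1), Fin (2^(l-(i:ℕ))) × Fin (2^(l-(i:ℕ)))

/-- Pixel `p` lies in cell `c`. -/
def inCell {l : ℕ} (p : Pix l) (c : Cell l) : Prop :=
  (p.1 : ℕ) / 2^(c.1 : ℕ) = (c.2.1 : ℕ) ∧ (p.2 : ℕ) / 2^(c.1 : ℕ) = (c.2.2 : ℕ)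

/-- The pyramid transform: the coordinate for a level-`i` cell `c` equals
`2^i` times the sum of `x` over the pixels of `c`. -/
noncomputable def pyr {l : ℕ} (x : Pix l → ℝ) (c : Cell l) : ℝ :=
  2^(c.1:ℕ) * ∑ p ∈ Finset.univ.filter (fun p : Pix l => inCell p c), x p

/-- `c'` is an ancestor of `c` (possibly `c` itself). -/
def isAncestor {l : ℕ} (c' c : Cell l) : Prop :=
  (c.1 : ℕ) ≤ (c'.1 : ℕ) ∧
  (c.2.1 : ℕ) / 2^((c'.1:ℕ) - (c.1:ℕ)) = (c'.2.1 : ℕ) ∧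
  (c.2.2 : ℕ) / 2^((c'.1:ℕ) - (c.1:ℕ)) = (c'.2.2 : ℕ)

/-- `S` is closed under taking ancestors, i.e. a rooted subtree of the 4-ary
cell hierarchy. -/
def AncClosed {l : ℕ} (S : Finset (Cell l)) : Prop :=
  ∀ c ∈ S, ∀ c' : Cell l, isAncestor c' c → c' ∈ S

/-- `c` is a child of `q` in the cell hierarchy. -/
def isChild {l : ℕ} (c q : Cell l) : Prop :=
  (q.1 : ℕ) = (c.1 : ℕ) + 1 ∧ (c.2.1 : ℕ) / 2 = (q.2.1 : ℕ) ∧ (c.2.2 : ℕ) / 2 = (q.2.2 : ℕ)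

/-- ℓ₁ norm of a vector indexed by a finite type. -/
noncomputable def l1 {ι : Type*} [Fintype ι] (v : ι → ℝ) : ℝ := ∑ i, |v i|

/-- Restriction of a vector to a set of coordinates. -/
noncomputable def restr {ι : Type*} (S : Finset ι) (v : ι → ℝ) : ι → ℝ :=
  fun i => if i ∈ S then v i else 0

/-- Number of nonzero coordinates. -/
noncomputable def sparsity {ι : Type*} [Fintype ι] (x : ι → ℝ) : ℕ :=
  (Finset.univ.filter fun i => x i ≠ 0).card

/-- ℓ₁ ground distance between pixels. -/
noncomputable def dist1 {l : ℕ} (p q : Pix l) : ℝ :=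
  |(p.1 : ℝ) - (q.1 : ℝ)| + |(p.2 : ℝ) - (q.2 : ℝ)|

/-- Min-cost flow distance between two nonnegative vectors of equal mass. -/
noncomputable def EMDstar {l : ℕ} (x y : Pix l → ℝ) : ℝ :=
  sInf {c | ∃ γ : Pix l → Pix l → ℝ, (∀ i j, 0 ≤ γ i j) ∧
    (∀ i, ∑ j, γ i j = x i) ∧ (∀ j, ∑ i, γ i j = y j) ∧
    c = ∑ i, ∑ j, γ i j * dist1 i j}

/-- The Earth-Mover norm of a general vector: min cost flow from positive to
negative part, with penalty `2Δ` per unit of unmatched mass. -/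
noncomputable def emdNorm {l : ℕ} (w : Pix l → ℝ) : ℝ :=
  sInf {c | ∃ x y z : Pix l → ℝ, (∀ i, 0 ≤ x i) ∧ (∀ i, 0 ≤ y i) ∧
    (∀ i, x i - y i + z i = w i) ∧ (∑ i, x i = ∑ i, y i) ∧
    c = EMDstar x y + (2 * 2^l) * l1 z}

/-- The cell at level `j` containing pixel `p`. -/
def cellOf {l : ℕ} (j : Fin (l+1)) (p : Pix l) : Cell l :=
  ⟨j, (⟨(p.1 : ℕ) / 2^(j:ℕ), by
        have hj : (j:ℕ) ≤ l := Nat.lt_succ_iff.mp j.2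
        have h : (p.1 : ℕ) < 2^(j:ℕ) * 2^(l-(j:ℕ)) := by
          rw [← pow_add, Nat.add_sub_cancel' hj]; exact p.1.2
        exact Nat.div_lt_of_lt_mul h⟩,
      ⟨(p.2 : ℕ) / 2^(j:ℕ), by
        have hj : (j:ℕ) ≤ l := Nat.lt_succ_iff.mp j.2
        have h : (p.2 : ℕ) < 2^(j:ℕ) * 2^(l-(j:ℕ)) := by
          rw [← pow_add, Nat.add_sub_cancel' hj]; exact p.2.2
        exact Nat.div_lt_of_lt_mul h⟩)⟩



/-- Row indices of the two-dimensional non-standard Haar transform: the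
constant vector, plus three rows (horizontal, vertical, diagonal) for each
cell at each level `i+1`, `i < l`. -/
abbrev RIdx (l : ℕ) := Unit ⊕ (Σ i : Fin l, Fin 3 × Fin (2^(l-((i:ℕ)+1))) × Fin (2^(l-((i:ℕ)+1))))

/-- The rescaled non-standard two-dimensional Haar wavelet transform `W`:
the constant row has entries `1/n³` (`n = Δ² = 4^l`), and the three rows for
a cell at level `m = i+1` have entries of magnitude `2^(m-2)` with signs given
by the horizontal / vertical / diagonal splits of the cell. -/
noncomputable def haarW (l : ℕ) : Matrix (RIdx l) (Pix l) ℝ :=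
  fun r p =>
    match r with
    | Sum.inl _ => 1 / ((4:ℝ)^l)^3
    | Sum.inr q =>
      let m : ℕ := (q.1 : ℕ) + 1
      let t : Fin 3 := q.2.1
      let a := q.2.2.1
      let b := q.2.2.2
      if (p.1 : ℕ) / 2^m = (a : ℕ) ∧ (p.2 : ℕ) / 2^m = (b : ℕ) then
        (2:ℝ)^((m:ℤ) - 2) *
          (if (t : ℕ) = 0 then (if (p.1 : ℕ) % 2^m < 2^(m-1) then 1 else -1)
           else if (t : ℕ) = 1 then (if (p.2 : ℕ) % 2^m < 2^(m-1) then 1 else -1)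
           else (if (p.1 : ℕ) % 2^m < 2^(m-1) then (1:ℝ) else -1) *
                (if (p.2 : ℕ) % 2^m < 2^(m-1) then 1 else -1))
      else 0

/-- The cell corresponding to a wavelet row (none for the constant row). -/
def cellOfRow {l : ℕ} : RIdx l → Option (Cell l)
  | Sum.inl _ => none
  | Sum.inr q => some ⟨⟨(q.1 : ℕ) + 1, Nat.succ_lt_succ q.1.2⟩, (q.2.2.1, q.2.2.2)⟩

/-- For nonnegative `x`, each wavelet coefficient of a cell is at most `1/4`
of the corresponding pyramid coefficient; consequently, if the ℓ₁ mass of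
`Px` outside a set of cells `S` is at most `ε·E`, where
`E = min_{k-sparse x'} ‖x - x'‖_EMD`, then the ℓ₁ mass of `Wx` outside the
induced support `S'` (the constant coefficient plus the three wavelet
coefficients of each cell of `S`) is at most `(3/4)·ε·E`. -/
lemma pyr_nonneg {l : ℕ} (x : Pix l → ℝ) (hx : ∀ p, 0 ≤ x p) (c : Cell l) :
    0 ≤ pyr x c :=
  mul_nonneg (by positivity) (Finset.sum_nonneg fun p _ => hx p)

lemma key_lemma {l : ℕ} (x : Pix l → ℝ) (hx : ∀ p, 0 ≤ x p)
    (q : Σ i : Fin l, Fin 3 × Fin (2^(l-((i:ℕ)+1))) × Fin (2^(l-((i:ℕ)+1)))) :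
    |∑ p : Pix l, haarW l (Sum.inr q) p * x p|
      ≤ (1/4) * |pyr x ⟨⟨(q.1 : ℕ) + 1, Nat.succ_lt_succ q.1.2⟩, (q.2.2.1, q.2.2.2)⟩| := by
  set c : Cell l := ⟨⟨(q.1 : ℕ) + 1, Nat.succ_lt_succ q.1.2⟩, (q.2.2.1, q.2.2.2)⟩ with hc
  have hcnn := pyr_nonneg x hx c
  rw [abs_of_nonneg hcnn]
  have h1 : ∀ p : Pix l, |haarW l (Sum.inr q) p * x p|
      ≤ (if inCell p c then (2:ℝ)^((((q.1 : ℕ) + 1 : ℕ):ℤ)-2) else 0) * x p := by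
    intro p
    rw [abs_mul, abs_of_nonneg (hx p)]
    apply mul_le_mul_of_nonneg_right _ (hx p)
    simp only [haarW]
    split_ifs with h h2 h3 <;> simp_all [inCell, hc, c] <;>
      positivity
  calc |∑ p : Pix l, haarW l (Sum.inr q) p * x p|
      ≤ ∑ p : Pix l, |haarW l (Sum.inr q) p * x p| := Finset.abs_sum_le_sum_abs _ _
    _ ≤ ∑ p : Pix l, (if inCell p c then (2:ℝ)^((((q.1 : ℕ) + 1 : ℕ):ℤ)-2) else 0) * x p :=
        Finset.sum_le_sum fun p _ => h1 p
    _ = (2:ℝ)^((((q.1 : ℕ) + 1 : ℕ):ℤ)-2)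
          * ∑ p ∈ Finset.univ.filter (fun p : Pix l => inCell p c), x p := by
        rw [Finset.sum_filter, Finset.mul_sum]
        exact Finset.sum_congr rfl fun p _ => by split_ifs <;> simp
    _ = (1/4) * pyr x c := by
        have h2 : (2:ℝ)^((((q.1 : ℕ) + 1 : ℕ):ℤ)-2) = (1/4) * 2^((q.1 : ℕ) + 1) := by
          rw [zpow_sub₀ (by norm_num : (2:ℝ) ≠ 0), zpow_natCast]
          norm_num; ring
        rw [pyr, h2, hc]; ring
theorem stmt15 {l : ℕ} (k : ℕ) (x : Pix l → ℝ) (hx : ∀ p, 0 ≤ x p) :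
    (∀ q : Σ i : Fin l, Fin 3 × Fin (2^(l-((i:ℕ)+1))) × Fin (2^(l-((i:ℕ)+1))),
      |∑ p : Pix l, haarW l (Sum.inr q) p * x p|
        ≤ (1/4) * |pyr x ⟨⟨(q.1 : ℕ) + 1, Nat.succ_lt_succ q.1.2⟩, (q.2.2.1, q.2.2.2)⟩|) ∧
    (∀ (S : Finset (Cell l)) (ε : ℝ), 0 ≤ ε →
      (∑ c ∈ Finset.univ.filter (fun c : Cell l => c ∉ S), |pyr x c|
          ≤ ε * sInf {e | ∃ x' : Pix l → ℝ, sparsity x' ≤ k ∧ e = emdNorm (x - x')}) →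
      ∑ r ∈ Finset.univ.filter (fun r : RIdx l => ∃ c, cellOfRow r = some c ∧ c ∉ S),
          |(haarW l).mulVec x r|
        ≤ (3/4) * ε * sInf {e | ∃ x' : Pix l → ℝ, sparsity x' ≤ k ∧ e = emdNorm (x - x')}) := by
  refine ⟨key_lemma x hx, ?_⟩
  intro S ε hε hP
  set E := sInf {e | ∃ x' : Pix l → ℝ, sparsity x' ≤ k ∧ e = emdNorm (x - x')} with hEdef
  set g : (Σ i : Fin l, Fin (2^(l-((i:ℕ)+1))) × Fin (2^(l-((i:ℕ)+1)))) → Cell l :=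
    fun s => ⟨⟨(s.1 : ℕ) + 1, Nat.succ_lt_succ s.1.2⟩, s.2⟩ with hg
  have hginj : Function.Injective g := by
    rintro ⟨i₁, ab₁⟩ ⟨i₂, ab₂⟩ h
    have h1 : (i₁ : ℕ) = (i₂ : ℕ) := by
      have := congrArg (fun c : Cell l => (c.1 : ℕ)) h
      simpa [hg] using this
    have hi : i₁ = i₂ := Fin.ext h1
    subst hi
    simpa [hg, Sigma.mk.inj_iff] using h
  have step1 : ∑ r ∈ Finset.univ.filter (fun r : RIdx l => ∃ c, cellOfRow r = some c ∧ c ∉ S),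
      |(haarW l).mulVec x r|
      ≤ (3/4) * ∑ c ∈ Finset.univ.filter (fun c : Cell l => c ∉ S), |pyr x c| := by
    rw [Finset.sum_filter, Fintype.sum_sum_type]
    have hunit : ∑ u : Unit, (if ∃ c, cellOfRow (Sum.inl u : RIdx l) = some c ∧ c ∉ S
        then |(haarW l).mulVec x (Sum.inl u)| else 0) = 0 := by
      simp [cellOfRow]
    rw [hunit, zero_add]
    have hb : ∀ q : Σ i : Fin l, Fin 3 × Fin (2^(l-((i:ℕ)+1))) × Fin (2^(l-((i:ℕ)+1))),
        (if ∃ c, cellOfRow (Sum.inr q : RIdx l) = some c ∧ c ∉ S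
          then |(haarW l).mulVec x (Sum.inr q)| else 0)
        ≤ (if g ⟨q.1, q.2.2⟩ ∉ S then (1/4) * |pyr x (g ⟨q.1, q.2.2⟩)| else 0) := by
      intro q
      have hcond : (∃ c, cellOfRow (Sum.inr q : RIdx l) = some c ∧ c ∉ S) ↔ g ⟨q.1, q.2.2⟩ ∉ S := by
        simp [cellOfRow, hg]
      by_cases h : g ⟨q.1, q.2.2⟩ ∉ S
      · rw [if_pos (hcond.mpr h), if_pos h]
        have := key_lemma x hx q
        simpa [Matrix.mulVec, dotProduct, hg] using this
      · rw [if_neg (fun hh => h (hcond.mp hh)), if_neg h]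
    calc ∑ q : Σ i : Fin l, Fin 3 × Fin (2^(l-((i:ℕ)+1))) × Fin (2^(l-((i:ℕ)+1))),
          (if ∃ c, cellOfRow (Sum.inr q : RIdx l) = some c ∧ c ∉ S
            then |(haarW l).mulVec x (Sum.inr q)| else 0)
        ≤ ∑ q : Σ i : Fin l, Fin 3 × Fin (2^(l-((i:ℕ)+1))) × Fin (2^(l-((i:ℕ)+1))),
            (if g ⟨q.1, q.2.2⟩ ∉ S then (1/4) * |pyr x (g ⟨q.1, q.2.2⟩)| else 0) :=
          Finset.sum_le_sum fun q _ => hb q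
      _ = ∑ i : Fin l, ∑ v : Fin 3 × Fin (2^(l-((i:ℕ)+1))) × Fin (2^(l-((i:ℕ)+1))),
            (if g ⟨i, v.2⟩ ∉ S then (1/4) * |pyr x (g ⟨i, v.2⟩)| else 0) := by
          rw [← Finset.univ_sigma_univ, Finset.sum_sigma]
      _ = ∑ i : Fin l, ∑ t : Fin 3, ∑ ab : Fin (2^(l-((i:ℕ)+1))) × Fin (2^(l-((i:ℕ)+1))),
            (if g ⟨i, ab⟩ ∉ S then (1/4) * |pyr x (g ⟨i, ab⟩)| else 0) := by
          exact Finset.sum_congr rfl fun i _ => by rw [Fintype.sum_prod_type]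
      _ = (3/4) * ∑ i : Fin l, ∑ ab : Fin (2^(l-((i:ℕ)+1))) × Fin (2^(l-((i:ℕ)+1))),
            (if g ⟨i, ab⟩ ∉ S then |pyr x (g ⟨i, ab⟩)| else 0) := by
          rw [Finset.mul_sum]
          refine Finset.sum_congr rfl fun i _ => ?_
          rw [Finset.sum_const, Finset.card_univ, Fintype.card_fin, nsmul_eq_mul,
            Finset.mul_sum, Finset.mul_sum]
          exact Finset.sum_congr rfl fun ab _ => by split_ifs <;> push_cast <;> ring
      _ = (3/4) * ∑ s : Σ i : Fin l, Fin (2^(l-((i:ℕ)+1))) × Fin (2^(l-((i:ℕ)+1))),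
            (if g s ∉ S then |pyr x (g s)| else 0) := by
          rw [← Finset.univ_sigma_univ, Finset.sum_sigma]
      _ ≤ (3/4) * ∑ c ∈ Finset.univ.filter (fun c : Cell l => c ∉ S), |pyr x c| := by
          apply mul_le_mul_of_nonneg_left _ (by norm_num)
          rw [← Finset.sum_filter]
          have himg : ∑ a ∈ Finset.univ.filter (fun a => g a ∉ S), |pyr x (g a)|
              = ∑ c ∈ (Finset.univ.filter (fun a => g a ∉ S)).image g, |pyr x c| :=
            (Finset.sum_image (f := fun c => |pyr x c|) fun s _ t _ h => hginj h).symm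
          rw [himg]
          apply Finset.sum_le_sum_of_subset_of_nonneg
          · intro c hc
            simp only [Finset.mem_image, Finset.mem_filter, Finset.mem_univ, true_and] at hc ⊢
            obtain ⟨s, hs, rfl⟩ := hc
            exact hs
          · intro c _ _; exact abs_nonneg _
    done
  have hE3 : (3:ℝ)/4 * ε * E = (3/4) * (ε * E) := by ring
  calc ∑ r ∈ Finset.univ.filter (fun r : RIdx l => ∃ c, cellOfRow r = some c ∧ c ∉ S),
        |(haarW l).mulVec x r|
      ≤ (3/4) * ∑ c ∈ Finset.univ.filter (fun c : Cell l => c ∉ S), |pyr x c| := step1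
    _ ≤ (3/4) * (ε * E) := by
        apply mul_le_mul_of_nonneg_left hP (by norm_num)
    _ = (3/4) * ε * E := by ring
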